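/- arXiv:1901.08686 — 3 statements merged into one kernel-verified Lean document; each statement's English description precedes it below -/
import Mathlib

section
/- Let x ∈ ℝ₊^m with all x_l > 0, let w ∈ ℝ₊^m with Σ_{l=1}^m w_l = 1, and set x̄ := Σ_{l=1}^m w_l x_l > 0. Then x̄ - ∏_{l=1}^m x_l^{w_l} ≥ (4/11) Σ_{l=1}^m w_l (max{x̄ - x_l, 0})² / x̄. -/
open Real Finset Set

private lemma aux_deriv (u : ℝ) : HasDerivAt (fun u : ℝ => (1 - u) * Real.exp (u + u ^ 2 / 2))
    (-(u ^ 2) * Real.exp (u + u ^ 2 / 2)) u := by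
  have h1 : HasDerivAt (fun u : ℝ => 1 - u) (-1) u := by
    simpa using (hasDerivAt_id u).const_sub 1
  have h2 : HasDerivAt (fun u : ℝ => u + u ^ 2 / 2) (1 + u) u := by
    have h3 := (hasDerivAt_pow 2 u).div_const 2
    have h4 := (hasDerivAt_id' u).add h3
    exact h4.congr_deriv (by ring)
  have := h1.mul h2.exp
  exact this.congr_deriv (by ring)

private lemma aux_key_exp (u : ℝ) (hu : 0 ≤ u) : (1 - u) * Real.exp (u + u ^ 2 / 2) ≤ 1 := by
  have hmono : AntitoneOn (fun u : ℝ => (1 - u) * Real.exp (u + u ^ 2 / 2)) (Set.Ici 0) := by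
    apply antitoneOn_of_deriv_nonpos (convex_Ici 0)
    · exact (Continuous.continuousOn (by continuity))
    · exact fun z hz => (aux_deriv z).differentiableAt.differentiableWithinAt
    · intro z hz
      rw [(aux_deriv z).deriv]
      have := Real.exp_pos (z + z ^ 2 / 2)
      nlinarith [sq_nonneg z]
  have := hmono Set.self_mem_Ici hu hu
  simpa using this

private lemma aux_log_le (t : ℝ) (ht : 0 < t) :
    Real.log t ≤ t - 1 - (max (1 - t) 0) ^ 2 / 2 := by
  rcases le_or_gt 1 t with h | h
  · have hm : max (1 - t) 0 = 0 := max_eq_right (by linarith)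
    rw [hm]
    have := Real.log_le_sub_one_of_pos ht
    norm_num
    linarith
  · have hm : max (1 - t) 0 = 1 - t := max_eq_left (by linarith)
    rw [hm, Real.log_le_iff_le_exp ht]
    have hu := aux_key_exp (1 - t) (by linarith)
    have h2 : t * Real.exp ((1 - t) + (1 - t) ^ 2 / 2) ≤ 1 := by
      have : (1 - (1 - t)) = t := by ring
      rw [this] at hu; exact hu
    have hepos := Real.exp_pos ((1 - t) + (1 - t) ^ 2 / 2)
    have ht2 : t ≤ 1 / Real.exp ((1 - t) + (1 - t) ^ 2 / 2) := by
      rw [le_div_iff₀ hepos]; linarith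
    calc t ≤ 1 / Real.exp ((1 - t) + (1 - t) ^ 2 / 2) := ht2
      _ = Real.exp (-((1 - t) + (1 - t) ^ 2 / 2)) := by rw [Real.exp_neg, one_div]
      _ = Real.exp (t - 1 - (1 - t) ^ 2 / 2) := by ring_nf

private lemma aux_exp_half : Real.exp (-(1/2 : ℝ)) ≤ 7/11 := by
  have h6 : (7/6 : ℝ) ≤ Real.exp (1/6) := by
    have := Real.add_one_le_exp (1/6 : ℝ)
    linarith
  have hsplit : Real.exp (1/2 : ℝ) = Real.exp (1/6) * Real.exp (1/6) * Real.exp (1/6) := by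
    rw [← Real.exp_add, ← Real.exp_add]; norm_num
  have hpos := Real.exp_pos (1/6 : ℝ)
  have hcube : (343/216 : ℝ) ≤ Real.exp (1/2) := by
    rw [hsplit]
    nlinarith [Real.exp_pos (1/6 : ℝ)]
  have hmul : Real.exp (-(1/2 : ℝ)) * Real.exp (1/2) = 1 := by
    rw [← Real.exp_add]; norm_num
  nlinarith [Real.exp_pos (-(1/2 : ℝ))]

private lemma aux_final (s : ℝ) (hs0 : 0 ≤ s) (hs1 : s ≤ 1) :
    (4/11) * s ≤ 1 - Real.exp (-(s/2)) := by
  have hc := convexOn_exp.2 (Set.mem_univ (-(1/2 : ℝ))) (Set.mem_univ (0 : ℝ))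
    hs0 (by linarith : (0:ℝ) ≤ 1 - s) (by ring)
  simp only [smul_eq_mul, mul_zero, add_zero, Real.exp_zero, mul_one] at hc
  have heq : s * -(1/2 : ℝ) = -(s/2) := by ring
  rw [heq] at hc
  have h7 := aux_exp_half
  nlinarith

theorem stmt_1 (m : ℕ) (x w : Fin m → ℝ)
    (hx : ∀ l, 0 < x l) (hw : ∀ l, 0 ≤ w l) (hw1 : ∑ l, w l = 1)
    (xbar : ℝ) (hxbar : xbar = ∑ l, w l * x l) (hpos : 0 < xbar) :
    xbar - ∏ l, (x l) ^ (w l) ≥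
      (4/11) * ∑ l, w l * (max (xbar - x l) 0) ^ 2 / xbar := by
  have hne : xbar ≠ 0 := ne_of_gt hpos
  set t : Fin m → ℝ := fun l => x l / xbar with hts
  have ht : ∀ l, 0 < t l := fun l => div_pos (hx l) hpos
  have hxt : ∀ l, x l = xbar * t l := by
    intro l; rw [hts]; field_simp
  have hsumt : ∑ l, w l * t l = 1 := by
    have : ∑ l, w l * t l = (∑ l, w l * x l) / xbar := by
      rw [Finset.sum_div]
      exact Finset.sum_congr rfl (fun l _ => by rw [hts]; ring)
    rw [this, ← hxbar, div_self hne]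
  set S : ℝ := ∑ l, w l * (max (1 - t l) 0) ^ 2 with hSdef
  have hS0 : 0 ≤ S := Finset.sum_nonneg fun l _ => mul_nonneg (hw l) (sq_nonneg _)
  have hS1 : S ≤ 1 := by
    rw [← hw1]
    apply Finset.sum_le_sum
    intro l _
    have h1 : max (1 - t l) 0 ≤ 1 := by
      apply max_le (by linarith [ht l]) (by norm_num)
    have h2 : (0:ℝ) ≤ max (1 - t l) 0 := le_max_right _ _
    have h3 : (max (1 - t l) 0) ^ 2 ≤ 1 := by nlinarith
    calc w l * (max (1 - t l) 0) ^ 2 ≤ w l * 1 := mul_le_mul_of_nonneg_left h3 (hw l)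
      _ = w l := mul_one _
  -- log sum bound
  have hlog : ∑ l, w l * Real.log (t l) ≤ -(S/2) := by
    have hstep : ∑ l, w l * Real.log (t l)
        ≤ ∑ l, (w l * t l - w l - w l * (max (1 - t l) 0) ^ 2 / 2) := by
      apply Finset.sum_le_sum
      intro l _
      have := mul_le_mul_of_nonneg_left (aux_log_le (t l) (ht l)) (hw l)
      calc w l * Real.log (t l) ≤ w l * (t l - 1 - (max (1 - t l) 0) ^ 2 / 2) := this
        _ = w l * t l - w l - w l * (max (1 - t l) 0) ^ 2 / 2 := by ring
    have hsplit : ∑ l, (w l * t l - w l - w l * (max (1 - t l) 0) ^ 2 / 2)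
        = (∑ l, w l * t l) - (∑ l, w l) - (∑ l, w l * (max (1 - t l) 0) ^ 2) / 2 := by
      rw [Finset.sum_div, ← Finset.sum_sub_distrib, ← Finset.sum_sub_distrib]
    rw [hsplit, hsumt, hw1] at hstep
    rw [hSdef]
    linarith
  -- product formula
  have hprod : ∏ l, (x l) ^ (w l) = xbar * Real.exp (∑ l, w l * Real.log (t l)) := by
    have h1 : ∀ l ∈ Finset.univ, (x l : ℝ) ^ (w l) = Real.exp (Real.log (x l) * w l) :=
      fun l _ => Real.rpow_def_of_pos (hx l) (w l)
    rw [Finset.prod_congr rfl h1, ← Real.exp_sum]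
    have h2 : ∑ l, Real.log (x l) * w l = Real.log xbar + ∑ l, w l * Real.log (t l) := by
      have h3 : ∀ l ∈ Finset.univ, Real.log (x l) * w l
          = w l * Real.log xbar + w l * Real.log (t l) := by
        intro l _
        rw [hxt l, Real.log_mul hne (ne_of_gt (ht l))]
        ring
      rw [Finset.sum_congr rfl h3, Finset.sum_add_distrib, ← Finset.sum_mul, hw1, one_mul]
    rw [h2, Real.exp_add, Real.exp_log hpos]
  -- RHS formula
  have hrhs : ∑ l, w l * (max (xbar - x l) 0) ^ 2 / xbar = xbar * S := by
    rw [hSdef, Finset.mul_sum]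
    apply Finset.sum_congr rfl
    intro l _
    have hmax : max (xbar - x l) 0 = xbar * max (1 - t l) 0 := by
      rw [hxt l]
      rw [mul_max_of_nonneg _ _ (le_of_lt hpos), mul_zero]
      congr 1; ring
    rw [hmax]
    field_simp
  rw [hrhs, hprod]
  have hub : Real.exp (∑ l, w l * Real.log (t l)) ≤ Real.exp (-(S/2)) :=
    Real.exp_le_exp.mpr hlog
  have hfin := aux_final S hS0 hS1
  have h1 : xbar * Real.exp (∑ l, w l * Real.log (t l)) ≤ xbar * Real.exp (-(S/2)) :=
    mul_le_mul_of_nonneg_left hub (le_of_lt hpos)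
  have h2 : (4/11) * (xbar * S) ≤ xbar * (1 - Real.exp (-(S/2))) := by
    have := mul_le_mul_of_nonneg_left hfin (le_of_lt hpos)
    nlinarith
  nlinarith
end

section
/- Let w ∈ ℝ₊^m with Σ_l w_l = 1 and let q_1, …, q_m ∈ ℝ₊^n each satisfy ⟨q_l, 𝟙⟩ = 1 (probability vectors). Define q̄ := Σ_l w_l q_l and q' ∈ ℝ₊^n by q'_j := exp(Σ_l w_l ln (q_l)_j) (entrywise weighted geometric mean, assuming all (q_l)_j > 0). Then ⟨q̄ - q', 𝟙⟩ ≥ (1/11) Σ_l w_l ‖q_l - q̄‖₁². -/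
-- quantitative log inequality: log u ≤ u - 1 - (u-1)²/2 for 0 < u ≤ 1
lemma aux_log {u : ℝ} (hu : 0 < u) (hu1 : u ≤ 1) :
    Real.log u ≤ u - 1 - (u - 1)^2 / 2 := by
  have key : AntitoneOn (fun x : ℝ => x - 1 - (x-1)^2/2 - Real.log x) (Set.Ioi 0) := by
    apply antitoneOn_of_deriv_nonpos (convex_Ioi 0)
    · apply ContinuousOn.sub (by fun_prop)
      exact Real.continuousOn_log.mono (fun x hx => ne_of_gt hx)
    · intro x hx
      rw [interior_Ioi] at hx
      have hd : HasDerivAt (fun x : ℝ => x - 1) 1 x := (hasDerivAt_id x).sub_const 1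
      have h1 := ((hd.sub ((hd.pow 2).div_const 2)).sub (Real.hasDerivAt_log (ne_of_gt hx)))
      exact h1.differentiableAt.differentiableWithinAt
    · intro x hx
      rw [interior_Ioi] at hx
      have hd : HasDerivAt (fun x : ℝ => x - 1) 1 x := (hasDerivAt_id x).sub_const 1
      have h1 := ((hd.sub ((hd.pow 2).div_const 2)).sub (Real.hasDerivAt_log (ne_of_gt hx)))
      rw [HasDerivAt.deriv (f := fun x : ℝ => x - 1 - (x-1)^2/2 - Real.log x) h1]
      have hne : x ≠ 0 := ne_of_gt hx
      have hxpos : (0:ℝ) < x := hx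
      push_cast
      nlinarith [sq_nonneg (x-1), mul_inv_cancel₀ hne, inv_pos.mpr hxpos]
  have h := key (Set.mem_Ioi.2 hu) (Set.mem_Ioi.2 one_pos) hu1
  simp [Real.log_one] at h
  linarith

-- chord bound: exp(-S/2) ≤ 1 - (4/11) S on [0,1]
lemma aux_chord {S : ℝ} (h0 : 0 ≤ S) (h1 : S ≤ 1) :
    Real.exp (-(S/2)) ≤ 1 - (4/11) * S := by
  have hconv := convexOn_exp.2 (Set.mem_univ (0:ℝ)) (Set.mem_univ (-(1/2):ℝ))
    (by linarith : (0:ℝ) ≤ 1 - S) h0 (by ring)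
  simp only [smul_eq_mul, mul_zero, zero_add, Real.exp_zero] at hconv
  have he : Real.exp (-(1/2:ℝ)) ≤ 7/11 := by
    have h2 : Real.exp (1/2:ℝ) ^ 2 = Real.exp 1 := by
      rw [← Real.exp_nat_mul]; norm_num
    have h3 : (2.7182818283 : ℝ) < Real.exp 1 := Real.exp_one_gt_d9
    have h4 : (11/7 : ℝ) ≤ Real.exp (1/2) := by
      nlinarith [Real.exp_pos (1/2:ℝ)]
    rw [Real.exp_neg]
    rw [inv_le_comm₀ (Real.exp_pos _) (by norm_num)]
    linarith
  have : S * (-(1/2)) = -(S/2) := by ring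
  rw [this] at hconv
  nlinarith

lemma xbar_pos {m : ℕ} (w x : Fin m → ℝ) (hw : ∀ l, 0 ≤ w l) (hw1 : ∑ l, w l = 1)
    (hx : ∀ l, 0 < x l) : 0 < ∑ l, w l * x l := by
  by_contra h
  push_neg at h
  have hnn : ∀ l ∈ Finset.univ, 0 ≤ w l * x l := fun l _ => mul_nonneg (hw l) (hx l).le
  have h0 : ∑ l, w l * x l = 0 := le_antisymm h (Finset.sum_nonneg hnn)
  have h1 := (Finset.sum_eq_zero_iff_of_nonneg hnn).1 h0
  have h2 : ∑ l, w l = 0 := Finset.sum_eq_zero fun l _ => by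
    rcases mul_eq_zero.1 (h1 l (Finset.mem_univ l)) with h | h
    · exact h
    · exact absurd h (ne_of_gt (hx l))
  rw [h2] at hw1; norm_num at hw1

lemma coord {m : ℕ} (w x : Fin m → ℝ) (hw : ∀ l, 0 ≤ w l) (hw1 : ∑ l, w l = 1)
    (hx : ∀ l, 0 < x l) (xb : ℝ) (hxb : xb = ∑ l, w l * x l) :
    Real.exp (∑ l, w l * Real.log (x l)) ≤
      xb - (4/11) * (∑ l, w l * (min (x l - xb) 0)^2) / xb := by
  have hxbpos : 0 < xb := hxb ▸ xbar_pos w x hw hw1 hx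
  set T := ∑ l, w l * (min (x l - xb) 0)^2 with hT
  set S := T / xb^2 with hS
  have hTnn : 0 ≤ T := Finset.sum_nonneg fun l _ => mul_nonneg (hw l) (sq_nonneg _)
  have hS0 : 0 ≤ S := div_nonneg hTnn (sq_nonneg _)
  have hS1 : S ≤ 1 := by
    rw [hS, div_le_one (by positivity)]
    calc T ≤ ∑ l, w l * xb^2 := by
            apply Finset.sum_le_sum
            intro l _
            apply mul_le_mul_of_nonneg_left _ (hw l)
            have h1 : -xb ≤ min (x l - xb) 0 := le_min (by nlinarith [hx l]) (by linarith)
            have h2 : min (x l - xb) 0 ≤ xb := le_trans (min_le_right _ _) hxbpos.le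
            nlinarith
      _ = xb^2 := by rw [← Finset.sum_mul, hw1, one_mul]
  -- pointwise log bound
  have hpt : ∀ l, Real.log (x l) ≤
      Real.log xb + (x l - xb)/xb - (1/2) * ((min (x l - xb) 0)^2 / xb^2) := by
    intro l
    have hu : 0 < x l / xb := div_pos (hx l) hxbpos
    have hlog : Real.log (x l) = Real.log xb + Real.log (x l / xb) := by
      rw [Real.log_div (ne_of_gt (hx l)) (ne_of_gt hxbpos)]; ring
    rcases le_or_gt (x l) xb with hle | hlt
    · have hu1 : x l / xb ≤ 1 := (div_le_one hxbpos).2 hle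
      have := aux_log hu hu1
      have hmin : min (x l - xb) 0 = x l - xb := min_eq_left (by linarith)
      rw [hlog, hmin]
      have he1 : x l / xb - 1 = (x l - xb)/xb := by field_simp
      rw [he1, div_pow] at this
      linarith
    · have hmin : min (x l - xb) 0 = 0 := min_eq_right (by linarith)
      have := Real.log_le_sub_one_of_pos hu
      rw [hlog, hmin]
      have he1 : x l / xb - 1 = (x l - xb)/xb := by field_simp
      rw [he1] at this
      simp only [ne_eq, OfNat.ofNat_ne_zero, not_false_eq_true, zero_pow, zero_div, mul_zero]
      linarith
  -- sum the pointwise bounds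
  have hsum : ∑ l, w l * Real.log (x l) ≤ Real.log xb - S/2 := by
    have h1 : ∑ l, w l * Real.log (x l) ≤
        ∑ l, w l * (Real.log xb + (x l - xb)/xb - (1/2) * ((min (x l - xb) 0)^2 / xb^2)) :=
      Finset.sum_le_sum fun l _ => mul_le_mul_of_nonneg_left (hpt l) (hw l)
    have h2 : ∑ l, w l * (Real.log xb + (x l - xb)/xb - (1/2) * ((min (x l - xb) 0)^2 / xb^2))
        = (∑ l, w l) * Real.log xb + (∑ l, w l * (x l - xb))/xb - (1/2) * (T/xb^2) := by
      rw [hT]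
      simp only [Finset.sum_mul, Finset.sum_div, Finset.mul_sum,
        ← Finset.sum_add_distrib, ← Finset.sum_sub_distrib]
      apply Finset.sum_congr rfl
      intro l _
      field_simp
    have h3 : ∑ l, w l * (x l - xb) = 0 := by
      simp_rw [mul_sub]
      rw [Finset.sum_sub_distrib, ← Finset.sum_mul, hw1, one_mul, ← hxb, sub_self]
    rw [h2, h3, hw1, zero_div, one_mul] at h1
    rw [hS]
    linarith
  calc Real.exp (∑ l, w l * Real.log (x l)) ≤ Real.exp (Real.log xb - S/2) :=
        Real.exp_le_exp.2 hsum
    _ = xb * Real.exp (-(S/2)) := by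
        rw [sub_eq_add_neg, Real.exp_add, Real.exp_log hxbpos]
    _ ≤ xb * (1 - (4/11) * S) := by
        apply mul_le_mul_of_nonneg_left (aux_chord hS0 hS1) hxbpos.le
    _ = xb - (4/11) * T / xb := by
        rw [hS]
        field_simp

theorem stmt_2 (m n : ℕ) (w : Fin m → ℝ) (q : Fin m → Fin n → ℝ)
    (hw : ∀ l, 0 ≤ w l) (hw1 : ∑ l, w l = 1)
    (hq : ∀ l j, 0 < q l j) (hq1 : ∀ l, ∑ j, q l j = 1)
    (qbar q' : Fin n → ℝ)
    (hqbar : ∀ j, qbar j = ∑ l, w l * q l j)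
    (hq' : ∀ j, q' j = Real.exp (∑ l, w l * Real.log (q l j))) :
    ∑ j, (qbar j - q' j) ≥
      (1/11) * ∑ l, w l * (∑ j, |q l j - qbar j|) ^ 2 := by
  have hqbarpos : ∀ j, 0 < qbar j := fun j =>
    (hqbar j) ▸ xbar_pos w (fun l => q l j) hw hw1 (fun l => hq l j)
  have hqbarsum : ∑ j, qbar j = 1 := by
    simp_rw [hqbar]
    rw [Finset.sum_comm]
    simp_rw [← Finset.mul_sum, hq1, mul_one]
    exact hw1
  -- coordinatewise bound
  have hcoord : ∀ j, qbar j - q' j ≥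
      (4/11) * (∑ l, w l * (min (q l j - qbar j) 0)^2) / qbar j := by
    intro j
    have := coord w (fun l => q l j) hw hw1 (fun l => hq l j) (qbar j) (hqbar j)
    rw [← hq' j] at this
    linarith
  have hstep1 : ∑ j, (qbar j - q' j) ≥
      (4/11) * ∑ l, w l * ∑ j, (min (q l j - qbar j) 0)^2 / qbar j := by
    have h1 : ∑ j, (qbar j - q' j) ≥
        ∑ j, (4/11) * (∑ l, w l * (min (q l j - qbar j) 0)^2) / qbar j :=
      Finset.sum_le_sum fun j _ => hcoord j
    have h2 : ∑ j, (4/11) * (∑ l, w l * (min (q l j - qbar j) 0)^2) / qbar j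
        = (4/11) * ∑ l, w l * ∑ j, (min (q l j - qbar j) 0)^2 / qbar j := by
      rw [Finset.mul_sum]
      simp_rw [Finset.mul_sum, Finset.sum_div]
      rw [Finset.sum_comm]
      apply Finset.sum_congr rfl
      intro l _
      apply Finset.sum_congr rfl
      intro j _
      ring
    linarith [h2 ▸ h1]
  -- per-l Cauchy-Schwarz
  have hCS : ∀ l, ∑ j, (min (q l j - qbar j) 0)^2 / qbar j ≥
      (1/4) * (∑ j, |q l j - qbar j|) ^ 2 := by
    intro l
    have hsed := Finset.sq_sum_div_le_sum_sq_div Finset.univ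
      (fun j => -(min (q l j - qbar j) 0)) (fun j _ => hqbarpos j)
    simp only [neg_sq] at hsed
    have hzero : ∑ j, (q l j - qbar j) = 0 := by
      rw [Finset.sum_sub_distrib, hq1 l, hqbarsum, sub_self]
    have habs : ∑ j, |q l j - qbar j| = 2 * ∑ j, -(min (q l j - qbar j) 0) := by
      have : ∀ j, |q l j - qbar j| = (q l j - qbar j) - 2 * min (q l j - qbar j) 0 := by
        intro j
        rcases le_or_gt (q l j - qbar j) 0 with h | h
        · rw [min_eq_left h, abs_of_nonpos h]; ring
        · rw [min_eq_right h.le, abs_of_pos h]; ring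
      simp_rw [this]
      rw [Finset.sum_sub_distrib, hzero, zero_sub, Finset.mul_sum, ← Finset.sum_neg_distrib]
      apply Finset.sum_congr rfl
      intro j _
      ring
    have hq2 : (∑ j, -(min (q l j - qbar j) 0))^2 / (∑ j, qbar j)
        = (1/4) * (∑ j, |q l j - qbar j|) ^ 2 := by
      rw [habs, hqbarsum]
      ring
    rw [hq2] at hsed
    exact hsed
  -- combine
  have hstep2 : ∑ l, w l * ∑ j, (min (q l j - qbar j) 0)^2 / qbar j ≥
      ∑ l, w l * ((1/4) * (∑ j, |q l j - qbar j|) ^ 2) :=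
    Finset.sum_le_sum fun l _ => mul_le_mul_of_nonneg_left (hCS l) (hw l)
  have hfin : (4/11) * ∑ l, w l * ((1/4) * (∑ j, |q l j - qbar j|) ^ 2)
      = (1/11) * ∑ l, w l * (∑ j, |q l j - qbar j|) ^ 2 := by
    rw [Finset.mul_sum, Finset.mul_sum]
    apply Finset.sum_congr rfl
    intro l _
    ring
  have : (4/11) * ∑ l, w l * ∑ j, (min (q l j - qbar j) 0)^2 / qbar j ≥
      (4/11) * ∑ l, w l * ((1/4) * (∑ j, |q l j - qbar j|) ^ 2) := by
    apply mul_le_mul_of_nonneg_left hstep2 (by norm_num)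
  linarith [hfin ▸ this]
end

section
/- Let u, v, u*, v* ∈ ℝ^{mn} (blocks u_l, v_l ∈ ℝ^n), B_l(u_l, v_l) := diag(e^{u_l}) K_l diag(e^{v_l}) with K_l ∈ ℝ₊^{n×n} positive, and f(u, v) := Σ_l w_l (⟨𝟙, B_l(u_l, v_l)𝟙⟩ - ⟨u_l, p_l⟩) with w ∈ S_m(1), p_l ∈ S_n(1). Suppose B_l(u_l, v_l)𝟙 = p_l for all l, all q_l := B_lᵀ(u_l, v_l)𝟙 satisfy ⟨q_l, 𝟙⟩ = 1, and the ranges of v_l and v*_l are each at most R_v. Then f(u, v) - f(u*, v*) ≤ R_v Σ_l w_l ‖q_l - q̄‖₁ where q̄ := Σ_l w_l q_l. -/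
theorem stmt_17 (m n : ℕ)
    (w : Fin m → ℝ) (hw : ∀ l, 0 ≤ w l) (hw1 : ∑ l, w l = 1)
    (p : Fin m → Fin n → ℝ) (hp : ∀ l i, 0 ≤ p l i) (hp1 : ∀ l, ∑ i, p l i = 1)
    (K : Fin m → Matrix (Fin n) (Fin n) ℝ) (hK : ∀ l i j, 0 < K l i j)
    (f : (Fin m → Fin n → ℝ) → (Fin m → Fin n → ℝ) → ℝ)
    (hf : ∀ u v, f u v = ∑ l, w l *
      ((∑ i, ∑ j, Real.exp (u l i) * K l i j * Real.exp (v l j)) -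
        ∑ i, u l i * p l i))
    (u v ustar vstar : Fin m → Fin n → ℝ)
    (Rv : ℝ)
    (hrow : ∀ l i, ∑ j, Real.exp (u l i) * K l i j * Real.exp (v l j) = p l i)
    (q : Fin m → Fin n → ℝ)
    (hq : ∀ l j, q l j = ∑ i, Real.exp (u l i) * K l i j * Real.exp (v l j))
    (hq1 : ∀ l, ∑ j, q l j = 1)
    (hvrange : ∀ l i i', v l i - v l i' ≤ Rv)
    (hvsrange : ∀ l i i', vstar l i - vstar l i' ≤ Rv)
    (hv0 : ∀ i, ∑ l, w l * v l i = 0)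
    (hvs0 : ∀ i, ∑ l, w l * vstar l i = 0)
    (hmin : ∀ u' v' : Fin m → Fin n → ℝ,
      (∀ i, ∑ l, w l * v' l i = 0) → f ustar vstar ≤ f u' v')
    (qbar : Fin n → ℝ) (hqbar : ∀ j, qbar j = ∑ l, w l * q l j) :
    f u v - f ustar vstar ≤ Rv * ∑ l, w l * ∑ j, |q l j - qbar j| := by
  rcases Nat.eq_zero_or_pos m with hm | hm
  · subst hm
    simp [hf]
  have l0 : Fin m := ⟨0, hm⟩
  rcases Nat.eq_zero_or_pos n with hn | hn
  · exfalso
    have h1 := hq1 l0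
    subst hn
    simpa using h1
  have hne : (Finset.univ : Finset (Fin n)).Nonempty := ⟨⟨0, hn⟩, Finset.mem_univ _⟩
  have hRv : 0 ≤ Rv := by
    have := hvrange l0 ⟨0, hn⟩ ⟨0, hn⟩
    linarith
  set d : Fin m → Fin n → ℝ := fun l j => v l j - vstar l j with hd
  clear_value d
  -- Step 1: convexity bound
  have step1 : f u v - f ustar vstar ≤ ∑ l, w l * ∑ j, d l j * q l j := by
    rw [hf, hf, ← Finset.sum_sub_distrib]
    apply Finset.sum_le_sum
    intro l _
    rw [← mul_sub]
    apply mul_le_mul_of_nonneg_left _ (hw l)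
    have key : (∑ i, ∑ j, Real.exp (u l i) * K l i j * Real.exp (v l j))
        - (∑ i, ∑ j, Real.exp (ustar l i) * K l i j * Real.exp (vstar l j))
        ≤ ∑ i, ∑ j, Real.exp (u l i) * K l i j * Real.exp (v l j) *
            ((u l i - ustar l i) + (v l j - vstar l j)) := by
      rw [← Finset.sum_sub_distrib]
      apply Finset.sum_le_sum; intro i _
      rw [← Finset.sum_sub_distrib]
      apply Finset.sum_le_sum; intro j _
      have hexp : Real.exp (u l i + v l j) *
          (((ustar l i + vstar l j) - (u l i + v l j)) + 1)
          ≤ Real.exp (ustar l i + vstar l j) := by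
        have h1 := Real.add_one_le_exp ((ustar l i + vstar l j) - (u l i + v l j))
        have h2 := mul_le_mul_of_nonneg_left h1 (Real.exp_pos (u l i + v l j)).le
        rwa [← Real.exp_add, add_sub_cancel] at h2
      have hE : Real.exp (u l i) * K l i j * Real.exp (v l j)
          = K l i j * Real.exp (u l i + v l j) := by rw [Real.exp_add]; ring
      have hE' : Real.exp (ustar l i) * K l i j * Real.exp (vstar l j)
          = K l i j * Real.exp (ustar l i + vstar l j) := by rw [Real.exp_add]; ring
      rw [hE, hE']
      have hmul := mul_le_mul_of_nonneg_left hexp (hK l i j).le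
      nlinarith [hmul]
    have comp : ∑ i, ∑ j, Real.exp (u l i) * K l i j * Real.exp (v l j) *
            ((u l i - ustar l i) + (v l j - vstar l j))
        = (∑ i, (u l i - ustar l i) * p l i) + ∑ j, d l j * q l j := by
      have split : ∀ i, ∑ j, Real.exp (u l i) * K l i j * Real.exp (v l j) *
              ((u l i - ustar l i) + (v l j - vstar l j))
          = (u l i - ustar l i) * (∑ j, Real.exp (u l i) * K l i j * Real.exp (v l j))
            + ∑ j, Real.exp (u l i) * K l i j * Real.exp (v l j) * (v l j - vstar l j) := by
        intro i
        rw [Finset.mul_sum, ← Finset.sum_add_distrib]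
        apply Finset.sum_congr rfl; intros; ring
      calc ∑ i, ∑ j, Real.exp (u l i) * K l i j * Real.exp (v l j) *
              ((u l i - ustar l i) + (v l j - vstar l j))
          = ∑ i, ((u l i - ustar l i) * p l i
              + ∑ j, Real.exp (u l i) * K l i j * Real.exp (v l j) * (v l j - vstar l j)) := by
            apply Finset.sum_congr rfl; intro i _
            rw [split i, hrow l i]
        _ = (∑ i, (u l i - ustar l i) * p l i)
              + ∑ i, ∑ j, Real.exp (u l i) * K l i j * Real.exp (v l j) * (v l j - vstar l j) :=
            Finset.sum_add_distrib
        _ = (∑ i, (u l i - ustar l i) * p l i) + ∑ j, d l j * q l j := by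
            congr 1
            rw [Finset.sum_comm]
            apply Finset.sum_congr rfl; intro j _
            rw [hq l j, Finset.mul_sum]
            apply Finset.sum_congr rfl; intros; simp only [hd]; ring
    have hup : ∑ i, (u l i - ustar l i) * p l i
        = (∑ i, u l i * p l i) - ∑ i, ustar l i * p l i := by
      rw [← Finset.sum_sub_distrib]
      apply Finset.sum_congr rfl; intros; ring
    rw [comp, hup] at key
    linarith
  -- Step 2: replace q by q - qbar
  have hz : ∀ j, ∑ l, w l * d l j = 0 := by
    intro j
    have h1 : ∑ l, w l * d l j = (∑ l, w l * v l j) - ∑ l, w l * vstar l j := by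
      rw [← Finset.sum_sub_distrib]
      apply Finset.sum_congr rfl; intros; simp only [hd]; ring
    rw [h1, hv0, hvs0]; ring
  have h0 : ∑ l, w l * ∑ j, d l j * qbar j = 0 := by
    have h1 : ∑ l, w l * ∑ j, d l j * qbar j = ∑ j, qbar j * ∑ l, w l * d l j := by
      simp_rw [Finset.mul_sum]
      rw [Finset.sum_comm]
      apply Finset.sum_congr rfl; intro j _
      apply Finset.sum_congr rfl; intros; ring
    rw [h1]
    apply Finset.sum_eq_zero
    intro j _
    rw [hz j, mul_zero]
  have step2 : ∑ l, w l * ∑ j, d l j * q l j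
      = ∑ l, w l * ∑ j, d l j * (q l j - qbar j) := by
    have expand : ∀ l : Fin m, ∑ j, d l j * (q l j - qbar j)
        = (∑ j, d l j * q l j) - ∑ j, d l j * qbar j := by
      intro l
      rw [← Finset.sum_sub_distrib]
      apply Finset.sum_congr rfl; intros; ring
    calc ∑ l, w l * ∑ j, d l j * q l j
        = ∑ l, (w l * ∑ j, d l j * (q l j - qbar j) + w l * ∑ j, d l j * qbar j) := by
          apply Finset.sum_congr rfl; intro l _
          rw [expand l]; ring
      _ = (∑ l, w l * ∑ j, d l j * (q l j - qbar j)) + ∑ l, w l * ∑ j, d l j * qbar j :=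
          Finset.sum_add_distrib
      _ = ∑ l, w l * ∑ j, d l j * (q l j - qbar j) := by rw [h0, add_zero]
  -- qbar sums to 1
  have hqbar1 : ∑ j, qbar j = 1 := by
    simp_rw [hqbar]
    rw [Finset.sum_comm]
    simp_rw [← Finset.mul_sum, hq1, mul_one]
    exact hw1
  -- Step 3: per-l Hoelder bound
  have step3 : ∀ l : Fin m, ∑ j, d l j * (q l j - qbar j)
      ≤ Rv * ∑ j, |q l j - qbar j| := by
    intro l
    obtain ⟨iM, -, hiM⟩ := Finset.exists_mem_eq_sup' hne (d l)
    obtain ⟨iN, -, hiN⟩ := Finset.exists_mem_eq_inf' hne (d l)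
    have hMN : d l iM - d l iN ≤ 2 * Rv := by
      have h1 := hvrange l iM iN
      have h2 := hvsrange l iN iM
      simp only [hd]
      linarith
    have hub : ∀ j, d l j ≤ d l iM := fun j =>
      hiM ▸ Finset.le_sup' (d l) (Finset.mem_univ j)
    have hlb : ∀ j, d l iN ≤ d l j := fun j =>
      hiN ▸ Finset.inf'_le (d l) (Finset.mem_univ j)
    have hbd : ∀ j, |d l j - (d l iM + d l iN) / 2| ≤ Rv := by
      intro j
      have h1 := hub j
      have h2 := hlb j
      rw [abs_le]
      constructor <;> linarith
    have hsum0 : ∑ j, (q l j - qbar j) = 0 := by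
      rw [Finset.sum_sub_distrib, hq1, hqbar1]; ring
    have heq : ∑ j, d l j * (q l j - qbar j)
        = ∑ j, (d l j - (d l iM + d l iN) / 2) * (q l j - qbar j) := by
      have h1 : ∑ j, (d l j - (d l iM + d l iN) / 2) * (q l j - qbar j)
          = (∑ j, d l j * (q l j - qbar j))
            - (d l iM + d l iN) / 2 * ∑ j, (q l j - qbar j) := by
        rw [Finset.mul_sum, ← Finset.sum_sub_distrib]
        apply Finset.sum_congr rfl; intros; ring
      rw [h1, hsum0]; ring
    rw [heq, Finset.mul_sum]
    apply Finset.sum_le_sum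
    intro j _
    calc (d l j - (d l iM + d l iN) / 2) * (q l j - qbar j)
        ≤ |(d l j - (d l iM + d l iN) / 2) * (q l j - qbar j)| := le_abs_self _
      _ = |d l j - (d l iM + d l iN) / 2| * |q l j - qbar j| := abs_mul _ _
      _ ≤ Rv * |q l j - qbar j| := mul_le_mul_of_nonneg_right (hbd j) (abs_nonneg _)
  calc f u v - f ustar vstar ≤ ∑ l, w l * ∑ j, d l j * q l j := step1
    _ = ∑ l, w l * ∑ j, d l j * (q l j - qbar j) := step2
    _ ≤ ∑ l, w l * (Rv * ∑ j, |q l j - qbar j|) := by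
        apply Finset.sum_le_sum; intro l _
        exact mul_le_mul_of_nonneg_left (step3 l) (hw l)
    _ = Rv * ∑ l, w l * ∑ j, |q l j - qbar j| := by
        rw [Finset.mul_sum]
        apply Finset.sum_congr rfl; intros; ring
end
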